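/- Let I and J be sets of nonnegative real numbers satisfying the descending chain condition, and let (t_k) be a bounded strictly increasing sequence of positive real numbers. Then the set L := {i + t_k·j | i ∈ I ∪ {0}, j ∈ J ∪ {0}, k ∈ ℤ_{>0}} satisfies the descending chain condition. -/

import Mathlib

/-- A set of reals satisfies the descending chain condition if it contains
no infinite strictly decreasing sequence. -/
def DCC (S : Set ℝ) : Prop := ¬ ∃ f : ℕ → ℝ, (∀ n, f n ∈ S) ∧ StrictAnti f

/-- A set of reals satisfies the ascending chain condition if it contains
no infinite strictly increasing sequence. -/
def ACC (S : Set ℝ) : Prop := ¬ ∃ f : ℕ → ℝ, (∀ n, f n ∈ S) ∧ StrictMono f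

/-- `I⁺ = {0} ∪ {x ∈ [0,1] | x is a finite (nonempty) sum of elements of I}`. -/
def plusSet (I : Set ℝ) : Set ℝ :=
  {0} ∪ {x | 0 ≤ x ∧ x ≤ 1 ∧ ∃ l : List ℝ, l ≠ [] ∧ (∀ j ∈ l, j ∈ I) ∧ l.sum = x}

/-- `D(I) = {a ≤ 1 | a = (m - 1 + f)/m, m ∈ ℤ_{>0}, f ∈ I⁺}`. -/
def DSet (I : Set ℝ) : Set ℝ :=
  {a | a ≤ 1 ∧ ∃ m : ℕ, 0 < m ∧ ∃ f ∈ plusSet I, a = ((m : ℝ) - 1 + f) / m}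

/-- `D_d(I) = {a ≤ 1 | a = (m - 1 + f + k·d)/m, k, m ∈ ℤ_{>0}, f ∈ I⁺}`. -/
def DdSet (d : ℝ) (I : Set ℝ) : Set ℝ :=
  {a | a ≤ 1 ∧ ∃ k m : ℕ, 0 < k ∧ 0 < m ∧ ∃ f ∈ plusSet I,
    a = ((m : ℝ) - 1 + f + (k : ℝ) * d) / m}

/-- A DCC set of nonnegative reals, with `0` adjoined, is well-founded for `<`. -/
lemma dcc_union_zero_isWF (I : Set ℝ) (hI : ∀ x ∈ I, 0 ≤ x) (hIdcc : DCC I) :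
    (I ∪ {0} : Set ℝ).IsWF := by
  rw [Set.isWF_iff_no_descending_seq]
  intro f hf hmem
  apply hIdcc
  refine ⟨f, fun n => ?_, hf⟩
  rcases hmem n with h | h
  · exact h
  · exfalso
    have h0 : f n = 0 := Set.mem_singleton_iff.mp h
    have h1 : f (n + 1) < 0 := h0 ▸ hf (Nat.lt_succ_self n)
    rcases hmem (n + 1) with h2 | h2
    · exact absurd (hI _ h2) (not_le.mpr h1)
    · exact absurd (Set.mem_singleton_iff.mp h2) (ne_of_lt h1)

lemma mem_union_zero_nonneg {I : Set ℝ} (hI : ∀ x ∈ I, 0 ≤ x) {x : ℝ}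
    (hx : x ∈ I ∪ {0}) : 0 ≤ x := by
  rcases hx with h | h
  · exact hI x h
  · simp [Set.mem_singleton_iff.mp h]

theorem coefficients_DCC (I J : Set ℝ) (hI : ∀ x ∈ I, 0 ≤ x)
    (hJ : ∀ x ∈ J, 0 ≤ x) (hIdcc : DCC I) (hJdcc : DCC J)
    (t : ℕ → ℝ) (htpos : ∀ k, 0 < t k) (htmono : StrictMono t)
    (htbdd : ∃ C : ℝ, ∀ k, t k ≤ C) :
    DCC {x : ℝ | ∃ i ∈ I ∪ {0}, ∃ j ∈ J ∪ {0}, ∃ k : ℕ, x = i + t k * j} := by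
  rintro ⟨f, hf, hanti⟩
  -- choose decompositions
  choose i hi j hj k hk using hf
  have hIpwo : (I ∪ {0} : Set ℝ).IsPWO := (dcc_union_zero_isWF I hI hIdcc).isPWO
  have hJpwo : (J ∪ {0} : Set ℝ).IsPWO := (dcc_union_zero_isWF J hJ hJdcc).isPWO
  have hNpwo : (Set.univ : Set ℕ).IsPWO :=
    (Set.isWF_univ_iff.mpr ⟨wellFounded_lt⟩).isPWO
  obtain ⟨g1, hg1⟩ := hIpwo.exists_monotone_subseq (f := i) hi
  obtain ⟨g2, hg2⟩ := hJpwo.exists_monotone_subseq (f := j ∘ g1) (fun n => hj _)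
  obtain ⟨g3, hg3⟩ := hNpwo.exists_monotone_subseq (f := k ∘ g1 ∘ g2) (fun n => Set.mem_univ _)
  set ψ : ℕ → ℕ := g1 ∘ g2 ∘ g3 with hψ
  have hψmono : StrictMono ψ :=
    g1.strictMono.comp (g2.strictMono.comp g3.strictMono)
  -- f ∘ ψ is monotone
  have hmono : (f ∘ ψ) 0 ≤ (f ∘ ψ) 1 := by
    have h1 : i (ψ 0) ≤ i (ψ 1) := by
      have := hg1.comp (g2.strictMono.comp g3.strictMono).monotone (by norm_num : (0:ℕ) ≤ 1)
      exact this
    have h2 : j (ψ 0) ≤ j (ψ 1) := hg2.comp g3.strictMono.monotone (by norm_num : (0:ℕ) ≤ 1)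
    have h3 : k (ψ 0) ≤ k (ψ 1) := hg3 (by norm_num : (0:ℕ) ≤ 1)
    have ht : t (k (ψ 0)) ≤ t (k (ψ 1)) := htmono.monotone h3
    have hjnn : 0 ≤ j (ψ 0) := mem_union_zero_nonneg hJ (hj _)
    have htnn : 0 ≤ t (k (ψ 1)) := (htpos _).le
    have : i (ψ 0) + t (k (ψ 0)) * j (ψ 0) ≤ i (ψ 1) + t (k (ψ 1)) * j (ψ 1) :=
      add_le_add h1 (mul_le_mul ht h2 hjnn htnn)
    simpa [Function.comp, hk (ψ 0), hk (ψ 1)] using this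
  have : (f ∘ ψ) 1 < (f ∘ ψ) 0 := hanti.comp_strictMono hψmono (by norm_num : (0:ℕ) < 1)
  exact absurd hmono (not_le.mpr this)
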